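/- Let V : ℤ → ℤ[T,T⁻¹] satisfy the Jones recurrence V(e+2) = (T³ − T)·V(e+1) + T⁴·V(e) for all e : ℤ, with V(0) = −T − T⁻¹ and V(1) = 1. Then for every a : ℤ, (T + T³)·V(a) = −T^(3a+2) − ε(a)·(T^a + T^(a+2) + T^(a+4)), where ε(a) = 1 if a is even and ε(a) = −1 if a is odd. -/

import Mathlib

open LaurentPolynomial in
/-- **Equation (3.4)** underlying Proposition 4.1 (Jones polynomials of `(2,a)` torus
links), cleared of denominators. If `V : ℤ → ℤ[T,T⁻¹]` satisfies the Jones recurrence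
with `V 0 = −T − T⁻¹` and `V 1 = 1`, then for every `a : ℤ`,
`(T + T³)·V(a) = −T^{3a+2} − ε(a)(T^a + T^{a+2} + T^{a+4})`, where `ε(a) = ±1`
according to the parity of `a`. -/
theorem jones_two_braid_closed_form (V : ℤ → LaurentPolynomial ℤ)
    (hV : ∀ e : ℤ, V (e + 2) = (T 3 - T 1) * V (e + 1) + T 4 * V e)
    (h0 : V 0 = -T 1 - T (-1))
    (h1 : V 1 = 1) :
    ∀ a : ℤ,
      (T 1 + T 3) * V a =
        -T (3 * a + 2) -
          (if Even a then 1 else -1) * (T a + T (a + 2) + T (a + 4)) := by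
  have hflip : ∀ b : ℤ, (if Even (b + 1) then (1 : LaurentPolynomial ℤ) else -1)
      = -(if Even b then 1 else -1) := by
    intro b
    by_cases h : Even b <;> simp [h, Int.even_add_one]
  have hflip' : ∀ b : ℤ, (if Even (b - 1) then (1 : LaurentPolynomial ℤ) else -1)
      = -(if Even b then 1 else -1) := by
    intro b
    have := hflip (b - 1)
    rw [sub_add_cancel] at this
    rw [this]; ring
  have hsame : ∀ b : ℤ, (if Even (b + 2) then (1 : LaurentPolynomial ℤ) else -1)
      = (if Even b then 1 else -1) := by
    intro b
    rw [show b + 2 = b + 1 + 1 by ring, hflip, hflip]; ring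
  have key : ∀ a : ℤ,
      ((T 1 + T 3) * V a =
        -T (3 * a + 2) -
          (if Even a then 1 else -1) * (T a + T (a + 2) + T (a + 4))) ∧
      ((T 1 + T 3) * V (a + 1) =
        -T (3 * (a + 1) + 2) -
          (if Even (a + 1) then 1 else -1) * (T (a + 1) + T (a + 1 + 2) + T (a + 1 + 4))) := by
    intro a
    induction a using Int.induction_on with
    | zero =>
      constructor
      · rw [h0, if_pos Even.zero]
        ring_nf
        simp only [T_pow, ← T_add]
        ring_nf
      · rw [zero_add, h1, mul_one, if_neg (by decide)]
        ring_nf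
    | succ k ih =>
      obtain ⟨ih1, ih2⟩ := ih
      refine ⟨ih2, ?_⟩
      have hrec := hV (k : ℤ)
      have hcombo : (T 1 + T 3 : LaurentPolynomial ℤ) * V ((k : ℤ) + 2)
          = (T 3 - T 1) * ((T 1 + T 3) * V ((k : ℤ) + 1)) + T 4 * ((T 1 + T 3) * V (k : ℤ)) := by
        rw [hrec]; ring
      rw [show ((k : ℤ) + 1 + 1 : ℤ) = (k : ℤ) + 2 by ring, hcombo, ih1, ih2]
      simp only [hflip, hsame]
      rcases Int.even_or_odd (k : ℤ) with h | h
      · rw [if_pos h]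
        ring_nf
        simp only [T_pow, ← T_add]
        ring_nf
      · rw [if_neg (by simpa [Int.not_even_iff_odd] using h)]
        ring_nf
        simp only [T_pow, ← T_add]
        ring_nf
    | pred k ih =>
      obtain ⟨ih1, ih2⟩ := ih
      refine ⟨?_, by rw [show (-(k : ℤ) - 1 + 1 : ℤ) = -(k : ℤ) by ring]; exact ih1⟩
      have hrec := hV (-(k : ℤ) - 1)
      have hinv : (T (-4) : LaurentPolynomial ℤ) * T 4 = 1 := by
        rw [← T_add]; norm_num
      have h4 : V (-(k : ℤ) - 1) = T (-4) *
          (V (-(k : ℤ) - 1 + 2) - (T 3 - T 1) * V (-(k : ℤ) - 1 + 1)) := by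
        calc V (-(k : ℤ) - 1) = (T (-4) * T 4) * V (-(k : ℤ) - 1) := by rw [hinv, one_mul]
          _ = T (-4) * (((T 3 - T 1) * V (-(k : ℤ) - 1 + 1) + T 4 * V (-(k : ℤ) - 1))
                - (T 3 - T 1) * V (-(k : ℤ) - 1 + 1)) := by ring
          _ = _ := by rw [← hrec]
      have hcombo : (T 1 + T 3 : LaurentPolynomial ℤ) * V (-(k : ℤ) - 1)
          = T (-4) * ((T 1 + T 3) * V (-(k : ℤ) - 1 + 2))
            - T (-4) * ((T 3 - T 1) * ((T 1 + T 3) * V (-(k : ℤ) - 1 + 1))) := by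
        rw [h4]; ring
      rw [hcombo, show (-(k : ℤ) - 1 + 2 : ℤ) = -(k : ℤ) + 1 by ring,
        show (-(k : ℤ) - 1 + 1 : ℤ) = -(k : ℤ) by ring, ih1, ih2]
      simp only [hflip, hflip', hsame]
      rcases Int.even_or_odd (-(k : ℤ)) with h | h
      · rw [if_pos h]
        ring_nf
        simp only [T_pow, ← T_add]
        ring_nf
      · rw [if_neg (by simpa [Int.not_even_iff_odd] using h)]
        ring_nf
        simp only [T_pow, ← T_add]
        ring_nf
  exact fun a => (key a).1
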